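/- Along the Mahalanobis fixed-point iterates β_{t+1,Σ} = T_{n,Σ}(β_{t,Σ}), for every q×p real matrix β it holds that G_{n,Σ}(β_{t+1,Σ}) ≤ G_{n,Σ}(β) + (1/2)(φ(β_{t,Σ}) − φ(β))ᵀ L_{n,Σ}(β_{t,Σ})(φ(β_{t,Σ}) − φ(β)) − (1/2)(φ(β_{t+1,Σ}) − φ(β))ᵀ L_{n,Σ}(β_{t,Σ})(φ(β_{t+1,Σ}) − φ(β)). -/

import Mathlib

open Matrix
open scoped BigOperators Kronecker

/-- Mahalanobis norm `‖v‖_{Σ⁻¹} = √(vᵀ Σ⁻¹ v)`. -/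
noncomputable def mahala {q : ℕ} (S : Matrix (Fin q) (Fin q) ℝ) (v : Fin q → ℝ) : ℝ :=
  Real.sqrt (v ⬝ᵥ S⁻¹.mulVec v)

/-- Row-wise vectorization of a `q × p` matrix. -/
def vecM {q p : ℕ} (B : Matrix (Fin q) (Fin p) ℝ) : Fin q × Fin p → ℝ :=
  fun ij => B ij.1 ij.2

/-- Empirical Mahalanobis criterion `G_{n,Σ}(β) = (1/n) ∑ᵢ ‖Yᵢ − βXᵢ‖_{Σ⁻¹}`. -/
noncomputable def GnS {p q n : ℕ} (S : Matrix (Fin q) (Fin q) ℝ)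
    (X : Fin n → Fin p → ℝ) (Y : Fin n → Fin q → ℝ)
    (β : Matrix (Fin q) (Fin p) ℝ) : ℝ :=
  (n : ℝ)⁻¹ * ∑ i, mahala S (Y i - β.mulVec (X i))

/-- Mahalanobis fixed point map
`T_{n,Σ}(β) = (∑ᵢ YᵢXᵢᵀ/‖Yᵢ−βXᵢ‖_{Σ⁻¹})(∑ᵢ XᵢXᵢᵀ/‖Yᵢ−βXᵢ‖_{Σ⁻¹})⁻¹`. -/
noncomputable def TnS {p q n : ℕ} (S : Matrix (Fin q) (Fin q) ℝ)
    (X : Fin n → Fin p → ℝ) (Y : Fin n → Fin q → ℝ)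
    (β : Matrix (Fin q) (Fin p) ℝ) : Matrix (Fin q) (Fin p) ℝ :=
  (∑ i, (mahala S (Y i - β.mulVec (X i)))⁻¹ • vecMulVec (Y i) (X i)) *
    (∑ i, (mahala S (Y i - β.mulVec (X i)))⁻¹ • vecMulVec (X i) (X i))⁻¹

/-- `L_{n,Σ}(β) = Σ⁻¹ ⊗ (1/n) ∑ᵢ XᵢXᵢᵀ/‖Yᵢ−βXᵢ‖_{Σ⁻¹}`. -/
noncomputable def LnS {p q n : ℕ} (S : Matrix (Fin q) (Fin q) ℝ)
    (X : Fin n → Fin p → ℝ) (Y : Fin n → Fin q → ℝ)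
    (β : Matrix (Fin q) (Fin p) ℝ) : Matrix (Fin q × Fin p) (Fin q × Fin p) ℝ :=
  S⁻¹ ⊗ₖ ((n : ℝ)⁻¹ • ∑ i, (mahala S (Y i - β.mulVec (X i)))⁻¹ • vecMulVec (X i) (X i))

section AuxStatement15

open Matrix
open scoped BigOperators Kronecker

private lemma s15_sqrt_dot_self (q : ℕ) (u : EuclideanSpace ℝ (Fin q)) :
    Real.sqrt (∑ i, u i * u i) = ‖u‖ := by
  rw [EuclideanSpace.norm_eq]; simp [Real.norm_eq_abs, sq_abs, sq]

private lemma s15_dot_tri {q : ℕ} (u v : Fin q → ℝ) :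
    Real.sqrt ((u + v) ⬝ᵥ (u + v)) ≤ Real.sqrt (u ⬝ᵥ u) + Real.sqrt (v ⬝ᵥ v) := by
  have h := norm_add_le ((EuclideanSpace.equiv (Fin q) ℝ).symm u)
    ((EuclideanSpace.equiv (Fin q) ℝ).symm v)
  rw [← s15_sqrt_dot_self q, ← s15_sqrt_dot_self q, ← s15_sqrt_dot_self q] at h
  simpa [dotProduct, mul_add, add_mul] using h

private lemma s15_dot_self_nonneg {q : ℕ} (u : Fin q → ℝ) : 0 ≤ u ⬝ᵥ u :=
  Finset.sum_nonneg fun i _ => mul_self_nonneg _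

private lemma s15_mahala_eq {q : ℕ} {S R : Matrix (Fin q) (Fin q) ℝ} (hR : S⁻¹ = Rᵀ * R)
    (v : Fin q → ℝ) : mahala S v = Real.sqrt ((R *ᵥ v) ⬝ᵥ (R *ᵥ v)) := by
  unfold mahala
  rw [hR, ← mulVec_mulVec, dotProduct_mulVec, vecMul_transpose]

private lemma s15_mahala_nonneg {q : ℕ} (S : Matrix (Fin q) (Fin q) ℝ) (v : Fin q → ℝ) :
    0 ≤ mahala S v := Real.sqrt_nonneg _

private lemma s15_quad_eq {q : ℕ} {S R : Matrix (Fin q) (Fin q) ℝ} (hR : S⁻¹ = Rᵀ * R)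
    (v : Fin q → ℝ) : v ⬝ᵥ S⁻¹.mulVec v = (R *ᵥ v) ⬝ᵥ (R *ᵥ v) := by
  rw [hR, ← mulVec_mulVec, dotProduct_mulVec, vecMul_transpose]

private lemma s15_quad_nonneg {q : ℕ} {S R : Matrix (Fin q) (Fin q) ℝ} (hR : S⁻¹ = Rᵀ * R)
    (v : Fin q → ℝ) : 0 ≤ v ⬝ᵥ S⁻¹.mulVec v := by
  rw [s15_quad_eq hR]; exact s15_dot_self_nonneg _

private lemma s15_mahala_sq {q : ℕ} {S R : Matrix (Fin q) (Fin q) ℝ} (hR : S⁻¹ = Rᵀ * R)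
    (v : Fin q → ℝ) : mahala S v ^ 2 = v ⬝ᵥ S⁻¹.mulVec v := by
  unfold mahala; rw [Real.sq_sqrt (s15_quad_nonneg hR v)]

private lemma s15_mahala_triangle {q : ℕ} {S R : Matrix (Fin q) (Fin q) ℝ} (hR : S⁻¹ = Rᵀ * R)
    (u v : Fin q → ℝ) : mahala S (u + v) ≤ mahala S u + mahala S v := by
  rw [s15_mahala_eq hR, s15_mahala_eq hR, s15_mahala_eq hR, mulVec_add]
  exact s15_dot_tri _ _

private lemma s15_mahala_sub_le {q : ℕ} {S R : Matrix (Fin q) (Fin q) ℝ} (hR : S⁻¹ = Rᵀ * R)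
    (u v : Fin q → ℝ) : (mahala S u - mahala S v) ^ 2 ≤ mahala S (u - v) ^ 2 := by
  have h1 : mahala S u ≤ mahala S v + mahala S (u - v) := by
    have := s15_mahala_triangle hR v (u - v); simpa using this
  have h2 : mahala S v ≤ mahala S u + mahala S (u - v) := by
    have := s15_mahala_triangle hR u (v - u)
    have hneg : mahala S (v - u) = mahala S (u - v) := by
      unfold mahala
      rw [show v - u = -(u - v) by ring, mulVec_neg, dotProduct_neg, neg_dotProduct, neg_neg]
    simp only [hneg] at this; simpa using this
  have hm := s15_mahala_nonneg S (u - v)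
  nlinarith [sq_nonneg (mahala S u - mahala S v)]

private lemma s15_quadform_kron {p q : ℕ} (Sm : Matrix (Fin q) (Fin q) ℝ)
    (M : Matrix (Fin p) (Fin p) ℝ) (U : Matrix (Fin q) (Fin p) ℝ) :
    vecM U ⬝ᵥ (Sm ⊗ₖ M) *ᵥ vecM U = ∑ j, ∑ j', Sm j j' * (U j ⬝ᵥ M *ᵥ U j') := by
  simp only [dotProduct, mulVec, kroneckerMap_apply, vecM, Fintype.sum_prod_type,
    Finset.mul_sum, Finset.sum_mul]
  refine Finset.sum_congr rfl fun j _ => ?_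
  rw [Finset.sum_comm]
  refine Finset.sum_congr rfl fun j' _ => Finset.sum_congr rfl fun k _ =>
    Finset.sum_congr rfl fun k' _ => by ring

private lemma s15_sum_mulVec {k m l : ℕ} (A : Fin k → Matrix (Fin m) (Fin l) ℝ) (v : Fin l → ℝ) :
    (∑ i, A i) *ᵥ v = ∑ i, A i *ᵥ v := by
  ext j
  simp only [mulVec, dotProduct, Matrix.sum_apply, Finset.sum_apply, Finset.sum_mul]
  exact Finset.sum_comm

private lemma s15_dotProduct_sum {k m : ℕ} (u : Fin m → ℝ) (w : Fin k → Fin m → ℝ) :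
    u ⬝ᵥ (∑ i, w i) = ∑ i, u ⬝ᵥ w i := by
  simp only [dotProduct, Finset.sum_apply, Finset.mul_sum]
  exact Finset.sum_comm

private lemma s15_vecMulVec_mulVec {m l : ℕ} (x : Fin m → ℝ) (y v : Fin l → ℝ) :
    (vecMulVec x y) *ᵥ v = (y ⬝ᵥ v) • x := by
  ext j
  simp only [mulVec, vecMulVec_apply, dotProduct, Pi.smul_apply, smul_eq_mul, Finset.sum_mul]
  exact Finset.sum_congr rfl fun l _ => by ring

private lemma s15_sum_rot {a b c : ℕ} (f : Fin a → Fin b → Fin c → ℝ) :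
    ∑ j, ∑ j', ∑ i, f j j' i = ∑ i, ∑ j, ∑ j', f j j' i := by
  have h : ∀ j, ∑ j', ∑ i, f j j' i = ∑ i, ∑ j', f j j' i := fun j => Finset.sum_comm
  simp_rw [h]
  exact Finset.sum_comm

private lemma s15_quadform {p q n : ℕ} (Sm : Matrix (Fin q) (Fin q) ℝ) (c : ℝ) (cw : Fin n → ℝ)
    (X : Fin n → Fin p → ℝ) (U : Matrix (Fin q) (Fin p) ℝ) :
    vecM U ⬝ᵥ (Sm ⊗ₖ (c • ∑ i, cw i • vecMulVec (X i) (X i))) *ᵥ vecM U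
      = c * ∑ i, cw i * ((U *ᵥ X i) ⬝ᵥ Sm *ᵥ (U *ᵥ X i)) := by
  rw [s15_quadform_kron]
  have hrow : ∀ (j j' : Fin q),
      U j ⬝ᵥ (c • ∑ i, cw i • vecMulVec (X i) (X i)) *ᵥ U j'
        = c * ∑ i, cw i * ((U *ᵥ X i) j * (U *ᵥ X i) j') := by
    intro j j'
    rw [smul_mulVec, dotProduct_smul, smul_eq_mul, s15_sum_mulVec, s15_dotProduct_sum]
    congr 1
    refine Finset.sum_congr rfl fun i _ => ?_
    rw [smul_mulVec, dotProduct_smul, s15_vecMulVec_mulVec, dotProduct_smul]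
    have h1 : (U *ᵥ X i) j = U j ⬝ᵥ X i := rfl
    have h2 : (U *ᵥ X i) j' = U j' ⬝ᵥ X i := rfl
    rw [h1, h2, smul_eq_mul, smul_eq_mul, dotProduct_comm (X i) (U j')]
    ring
  simp only [hrow]
  have hdq : ∀ i, (U *ᵥ X i) ⬝ᵥ Sm *ᵥ (U *ᵥ X i)
      = ∑ j, ∑ j', Sm j j' * ((U *ᵥ X i) j * (U *ᵥ X i) j') := by
    intro i
    simp only [dotProduct, mulVec, Finset.mul_sum, Finset.sum_mul]
    exact Finset.sum_congr rfl fun j _ => Finset.sum_congr rfl fun j' _ =>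
      Finset.sum_congr rfl fun k _ => Finset.sum_congr rfl fun k' _ => by ring
  simp only [hdq, Finset.mul_sum]
  rw [s15_sum_rot]
  exact Finset.sum_congr rfl fun i _ => Finset.sum_congr rfl fun j _ =>
    Finset.sum_congr rfl fun j' _ => by ring

private lemma s15_dot_symm {q : ℕ} {M : Matrix (Fin q) (Fin q) ℝ} (hM : Mᵀ = M)
    (u v : Fin q → ℝ) : u ⬝ᵥ M *ᵥ v = v ⬝ᵥ M *ᵥ u := by
  rw [dotProduct_mulVec]
  conv_lhs => rw [← hM]
  rw [vecMul_transpose, dotProduct_comm]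

private lemma s15_quad_add {q : ℕ} {M : Matrix (Fin q) (Fin q) ℝ} (hM : Mᵀ = M)
    (u v : Fin q → ℝ) :
    (u + v) ⬝ᵥ M *ᵥ (u + v)
      = u ⬝ᵥ M *ᵥ u + 2 * (u ⬝ᵥ M *ᵥ v) + v ⬝ᵥ M *ᵥ v := by
  rw [mulVec_add, add_dotProduct, dotProduct_add, dotProduct_add, s15_dot_symm hM v u]
  ring

private lemma s15_mul_vecMulVec {p q : ℕ} (b : Matrix (Fin q) (Fin q) ℝ)
    (x : Fin q → ℝ) (y : Fin p → ℝ) :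
    b * vecMulVec x y = vecMulVec (b *ᵥ x) y := by
  ext j l
  simp only [Matrix.mul_apply, vecMulVec_apply, mulVec, dotProduct, Finset.sum_mul]
  exact Finset.sum_congr rfl fun m _ => by ring

private lemma s15_step1 (a w : ℝ) (hw : 0 < w) (ha : 0 ≤ a) :
    a ≤ (w⁻¹ * a ^ 2 + w) / 2 := by
  have h2 : w⁻¹ * ((a - w) ^ 2) = w⁻¹ * a ^ 2 - 2 * a + w := by
    field_simp; ring
  nlinarith [mul_nonneg (inv_nonneg.mpr hw.le) (sq_nonneg (a - w))]

private lemma s15_step3 (a w c : ℝ) (hw : 0 < w) (h : (a - w) ^ 2 ≤ c) :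
    w⁻¹ * a ^ 2 + w ≤ 2 * a + w⁻¹ * c := by
  have h1 : w⁻¹ * ((a - w) ^ 2) ≤ w⁻¹ * c :=
    mul_le_mul_of_nonneg_left h (inv_nonneg.mpr hw.le)
  have h2 : w⁻¹ * ((a - w) ^ 2) = w⁻¹ * a ^ 2 - 2 * a + w := by
    field_simp; ring
  linarith

end AuxStatement15

/-- Lemma 6 of the paper: along the Mahalanobis fixed-point iterates
`β_{t+1,Σ} = T_{n,Σ}(β_{t,Σ})`, for every matrix `β` a three-point descent inequality holds. -/
theorem statement15 {p q n : ℕ}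
    (S : Matrix (Fin q) (Fin q) ℝ) (hS : S.PosDef)
    (X : Fin n → Fin p → ℝ) (Y : Fin n → Fin q → ℝ)
    (hinv : ∀ β : Matrix (Fin q) (Fin p) ℝ,
      IsUnit (∑ i, (mahala S (Y i - β.mulVec (X i)))⁻¹ • vecMulVec (X i) (X i)))
    (B : ℕ → Matrix (Fin q) (Fin p) ℝ)
    (hrec : ∀ t, B (t + 1) = TnS S X Y (B t))
    (hpos : ∀ t i, 0 < mahala S (Y i - (B t).mulVec (X i))) :
    ∀ (t : ℕ) (β : Matrix (Fin q) (Fin p) ℝ),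
      GnS S X Y (B (t + 1)) ≤ GnS S X Y β
        + (1 / 2) * ((vecM (B t) - vecM β) ⬝ᵥ
            (LnS S X Y (B t)).mulVec (vecM (B t) - vecM β))
        - (1 / 2) * ((vecM (B (t + 1)) - vecM β) ⬝ᵥ
            (LnS S X Y (B t)).mulVec (vecM (B (t + 1)) - vecM β)) := by
  open scoped MatrixOrder Matrix.Norms.L2Operator in
  obtain ⟨R, hR0⟩ := CStarAlgebra.nonneg_iff_eq_star_mul_self.mp hS.inv.posSemidef.nonneg
  have hR : S⁻¹ = Rᵀ * R := by simpa [star_eq_conjTranspose] using hR0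
  have hsymm : (S⁻¹)ᵀ = S⁻¹ := by rw [hR, transpose_mul, transpose_transpose]
  intro t β
  set b := B t with hbdef
  set b' := B (t + 1) with hb'def
  have hw : ∀ i, 0 < mahala S (Y i - b *ᵥ X i) := fun i => hpos t i
  -- stationarity of b'
  have hA : IsUnit (∑ i, (mahala S (Y i - b *ᵥ X i))⁻¹ • vecMulVec (X i) (X i)) := hinv b
  have hb'A : b' * (∑ i, (mahala S (Y i - b *ᵥ X i))⁻¹ • vecMulVec (X i) (X i))
      = ∑ i, (mahala S (Y i - b *ᵥ X i))⁻¹ • vecMulVec (Y i) (X i) := by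
    rw [hb'def, hrec t]
    show TnS S X Y b * _ = _
    rw [TnS]
    exact Matrix.nonsing_inv_mul_cancel_right _ _ ((Matrix.isUnit_iff_isUnit_det _).mp hA)
  have hZ : ∑ i, (mahala S (Y i - b *ᵥ X i))⁻¹ • vecMulVec (Y i - b' *ᵥ X i) (X i) = 0 := by
    have hsplit : ∀ i, (mahala S (Y i - b *ᵥ X i))⁻¹ • vecMulVec (Y i - b' *ᵥ X i) (X i)
        = (mahala S (Y i - b *ᵥ X i))⁻¹ • vecMulVec (Y i) (X i)
          - b' * ((mahala S (Y i - b *ᵥ X i))⁻¹ • vecMulVec (X i) (X i)) := by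
      intro i
      ext j l
      simp only [Matrix.smul_apply, vecMulVec_apply, Matrix.sub_apply, Matrix.mul_apply,
        Pi.sub_apply, mulVec, dotProduct, smul_eq_mul]
      rw [sub_mul, mul_sub, Finset.sum_mul, Finset.mul_sum]
      congr 1
      exact Finset.sum_congr rfl fun m _ => by ring
    simp_rw [hsplit]
    rw [Finset.sum_sub_distrib, ← Matrix.mul_sum, hb'A, sub_self]
  have hz : ∀ (j : Fin q) (l : Fin p),
      ∑ i, (mahala S (Y i - b *ᵥ X i))⁻¹ * ((Y i j - (b' *ᵥ X i) j) * X i l) = 0 := by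
    intro j l
    have h := congrFun (congrFun hZ j) l
    simpa [Matrix.sum_apply, Finset.sum_apply, Matrix.smul_apply, vecMulVec_apply,
      smul_eq_mul, Pi.sub_apply] using h
  have hcross : ∀ D : Matrix (Fin q) (Fin p) ℝ,
      ∑ i, (mahala S (Y i - b *ᵥ X i))⁻¹ * ((Y i - b' *ᵥ X i) ⬝ᵥ S⁻¹ *ᵥ (D *ᵥ X i)) = 0 := by
    intro D
    have hstep : ∀ i, (mahala S (Y i - b *ᵥ X i))⁻¹ * ((Y i - b' *ᵥ X i) ⬝ᵥ S⁻¹ *ᵥ (D *ᵥ X i))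
        = ∑ j, ∑ l, (S⁻¹ * D) j l
            * ((mahala S (Y i - b *ᵥ X i))⁻¹ * ((Y i j - (b' *ᵥ X i) j) * X i l)) := by
      intro i
      rw [mulVec_mulVec]
      simp only [dotProduct, mulVec, Finset.mul_sum, Pi.sub_apply]
      refine Finset.sum_congr rfl fun j _ => Finset.sum_congr rfl fun l _ => by ring
    simp_rw [hstep]
    rw [← s15_sum_rot]
    refine Finset.sum_eq_zero fun j _ => Finset.sum_eq_zero fun l _ => ?_
    rw [← Finset.mul_sum, hz j l, mul_zero]
  -- quadratic expansion around b'
  have hqexp :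
      ∑ i, (mahala S (Y i - b *ᵥ X i))⁻¹ * ((Y i - β *ᵥ X i) ⬝ᵥ S⁻¹ *ᵥ (Y i - β *ᵥ X i))
        = ∑ i, (mahala S (Y i - b *ᵥ X i))⁻¹ * ((Y i - b' *ᵥ X i) ⬝ᵥ S⁻¹ *ᵥ (Y i - b' *ᵥ X i))
          + ∑ i, (mahala S (Y i - b *ᵥ X i))⁻¹
              * (((b' - β) *ᵥ X i) ⬝ᵥ S⁻¹ *ᵥ ((b' - β) *ᵥ X i)) := by
    have hterm : ∀ i,
        (mahala S (Y i - b *ᵥ X i))⁻¹ * ((Y i - β *ᵥ X i) ⬝ᵥ S⁻¹ *ᵥ (Y i - β *ᵥ X i))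
          = (mahala S (Y i - b *ᵥ X i))⁻¹ * ((Y i - b' *ᵥ X i) ⬝ᵥ S⁻¹ *ᵥ (Y i - b' *ᵥ X i))
            + (mahala S (Y i - b *ᵥ X i))⁻¹ * (((b' - β) *ᵥ X i) ⬝ᵥ S⁻¹ *ᵥ ((b' - β) *ᵥ X i))
            + 2 * ((mahala S (Y i - b *ᵥ X i))⁻¹
                * ((Y i - b' *ᵥ X i) ⬝ᵥ S⁻¹ *ᵥ ((b' - β) *ᵥ X i))) := by
      intro i
      have hsp : Y i - β *ᵥ X i = (Y i - b' *ᵥ X i) + (b' - β) *ᵥ X i := by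
        rw [sub_mulVec]; abel
      rw [hsp, s15_quad_add hsymm]; ring
    calc ∑ i, (mahala S (Y i - b *ᵥ X i))⁻¹ * ((Y i - β *ᵥ X i) ⬝ᵥ S⁻¹ *ᵥ (Y i - β *ᵥ X i))
        = ∑ i, ((mahala S (Y i - b *ᵥ X i))⁻¹ * ((Y i - b' *ᵥ X i) ⬝ᵥ S⁻¹ *ᵥ (Y i - b' *ᵥ X i))
            + (mahala S (Y i - b *ᵥ X i))⁻¹ * (((b' - β) *ᵥ X i) ⬝ᵥ S⁻¹ *ᵥ ((b' - β) *ᵥ X i))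
            + 2 * ((mahala S (Y i - b *ᵥ X i))⁻¹
                * ((Y i - b' *ᵥ X i) ⬝ᵥ S⁻¹ *ᵥ ((b' - β) *ᵥ X i)))) :=
          Finset.sum_congr rfl fun i _ => hterm i
      _ = ∑ i, (mahala S (Y i - b *ᵥ X i))⁻¹ * ((Y i - b' *ᵥ X i) ⬝ᵥ S⁻¹ *ᵥ (Y i - b' *ᵥ X i))
            + ∑ i, (mahala S (Y i - b *ᵥ X i))⁻¹
                * (((b' - β) *ᵥ X i) ⬝ᵥ S⁻¹ *ᵥ ((b' - β) *ᵥ X i))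
            + ∑ i, 2 * ((mahala S (Y i - b *ᵥ X i))⁻¹
                * ((Y i - b' *ᵥ X i) ⬝ᵥ S⁻¹ *ᵥ ((b' - β) *ᵥ X i))) := by
          rw [Finset.sum_add_distrib, Finset.sum_add_distrib]
      _ = _ := by
          rw [← Finset.mul_sum, hcross (b' - β), mul_zero, add_zero]
  -- step 1
  have h1 : ∑ i, mahala S (Y i - b' *ᵥ X i)
      ≤ (∑ i, (mahala S (Y i - b *ᵥ X i))⁻¹
            * ((Y i - b' *ᵥ X i) ⬝ᵥ S⁻¹ *ᵥ (Y i - b' *ᵥ X i))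
          + ∑ i, mahala S (Y i - b *ᵥ X i)) / 2 := by
    have hi : ∀ i ∈ Finset.univ, mahala S (Y i - b' *ᵥ X i)
        ≤ ((mahala S (Y i - b *ᵥ X i))⁻¹
            * ((Y i - b' *ᵥ X i) ⬝ᵥ S⁻¹ *ᵥ (Y i - b' *ᵥ X i))
          + mahala S (Y i - b *ᵥ X i)) / 2 := by
      intro i _
      have := s15_step1 (mahala S (Y i - b' *ᵥ X i)) (mahala S (Y i - b *ᵥ X i)) (hw i)
        (s15_mahala_nonneg S _)
      rwa [s15_mahala_sq hR] at this
    calc ∑ i, mahala S (Y i - b' *ᵥ X i)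
        ≤ ∑ i, ((mahala S (Y i - b *ᵥ X i))⁻¹
              * ((Y i - b' *ᵥ X i) ⬝ᵥ S⁻¹ *ᵥ (Y i - b' *ᵥ X i))
            + mahala S (Y i - b *ᵥ X i)) / 2 := Finset.sum_le_sum hi
      _ = _ := by rw [← Finset.sum_div, Finset.sum_add_distrib]
  -- step 3
  have h3 : ∑ i, (mahala S (Y i - b *ᵥ X i))⁻¹
          * ((Y i - β *ᵥ X i) ⬝ᵥ S⁻¹ *ᵥ (Y i - β *ᵥ X i))
        + ∑ i, mahala S (Y i - b *ᵥ X i)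
      ≤ 2 * ∑ i, mahala S (Y i - β *ᵥ X i)
        + ∑ i, (mahala S (Y i - b *ᵥ X i))⁻¹
            * (((b - β) *ᵥ X i) ⬝ᵥ S⁻¹ *ᵥ ((b - β) *ᵥ X i)) := by
    have hi : ∀ i ∈ Finset.univ,
        (mahala S (Y i - b *ᵥ X i))⁻¹ * ((Y i - β *ᵥ X i) ⬝ᵥ S⁻¹ *ᵥ (Y i - β *ᵥ X i))
            + mahala S (Y i - b *ᵥ X i)
          ≤ 2 * mahala S (Y i - β *ᵥ X i)
            + (mahala S (Y i - b *ᵥ X i))⁻¹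
                * (((b - β) *ᵥ X i) ⬝ᵥ S⁻¹ *ᵥ ((b - β) *ᵥ X i)) := by
      intro i _
      have hd : (mahala S (Y i - β *ᵥ X i) - mahala S (Y i - b *ᵥ X i)) ^ 2
          ≤ ((b - β) *ᵥ X i) ⬝ᵥ S⁻¹ *ᵥ ((b - β) *ᵥ X i) := by
        have h := s15_mahala_sub_le hR (Y i - β *ᵥ X i) (Y i - b *ᵥ X i)
        have he : (Y i - β *ᵥ X i) - (Y i - b *ᵥ X i) = (b - β) *ᵥ X i := by
          rw [sub_mulVec]; abel
        rwa [he, s15_mahala_sq hR] at h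
      have := s15_step3 (mahala S (Y i - β *ᵥ X i)) (mahala S (Y i - b *ᵥ X i))
        (((b - β) *ᵥ X i) ⬝ᵥ S⁻¹ *ᵥ ((b - β) *ᵥ X i)) (hw i) hd
      rwa [s15_mahala_sq hR] at this
    calc ∑ i, (mahala S (Y i - b *ᵥ X i))⁻¹
            * ((Y i - β *ᵥ X i) ⬝ᵥ S⁻¹ *ᵥ (Y i - β *ᵥ X i))
          + ∑ i, mahala S (Y i - b *ᵥ X i)
        = ∑ i, ((mahala S (Y i - b *ᵥ X i))⁻¹
              * ((Y i - β *ᵥ X i) ⬝ᵥ S⁻¹ *ᵥ (Y i - β *ᵥ X i))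
            + mahala S (Y i - b *ᵥ X i)) := (Finset.sum_add_distrib).symm
      _ ≤ ∑ i, (2 * mahala S (Y i - β *ᵥ X i)
            + (mahala S (Y i - b *ᵥ X i))⁻¹
                * (((b - β) *ᵥ X i) ⬝ᵥ S⁻¹ *ᵥ ((b - β) *ᵥ X i))) := Finset.sum_le_sum hi
      _ = _ := by rw [Finset.sum_add_distrib, Finset.mul_sum]
  -- assemble
  have hvb : vecM b - vecM β = vecM (b - β) := by
    funext ij; simp [vecM, Matrix.sub_apply]
  have hvb' : vecM b' - vecM β = vecM (b' - β) := by
    funext ij; simp [vecM, Matrix.sub_apply]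
  rw [hvb, hvb']
  show GnS S X Y b' ≤ GnS S X Y β
      + 1 / 2 * (vecM (b - β) ⬝ᵥ (S⁻¹ ⊗ₖ ((n : ℝ)⁻¹
          • ∑ i, (mahala S (Y i - b *ᵥ X i))⁻¹ • vecMulVec (X i) (X i))) *ᵥ vecM (b - β))
      - 1 / 2 * (vecM (b' - β) ⬝ᵥ (S⁻¹ ⊗ₖ ((n : ℝ)⁻¹
          • ∑ i, (mahala S (Y i - b *ᵥ X i))⁻¹ • vecMulVec (X i) (X i))) *ᵥ vecM (b' - β))
  rw [s15_quadform, s15_quadform, GnS, GnS]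
  simp only [sub_mulVec]
  have hn : (0 : ℝ) ≤ (n : ℝ)⁻¹ := by positivity
  have hsum : ∑ i, mahala S (Y i - b' *ᵥ X i)
      ≤ ∑ i, mahala S (Y i - β *ᵥ X i)
        + 1 / 2 * ∑ i, (mahala S (Y i - b *ᵥ X i))⁻¹
            * (((b - β) *ᵥ X i) ⬝ᵥ S⁻¹ *ᵥ ((b - β) *ᵥ X i))
        - 1 / 2 * ∑ i, (mahala S (Y i - b *ᵥ X i))⁻¹
            * (((b' - β) *ᵥ X i) ⬝ᵥ S⁻¹ *ᵥ ((b' - β) *ᵥ X i)) := by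
    linarith [h1, hqexp, h3]
  have hmul := mul_le_mul_of_nonneg_left hsum hn
  simp only [sub_mulVec] at hmul
  nlinarith [hmul]
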